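/- arXiv:1610.07160 — 3 statements merged into one kernel-verified Lean document; each statement's English description precedes it below -/
import Mathlib

section
/- In any finite-stage two-player game with alternating moves (of any length N, with any action sets and any real-valued payoff functions), either (i) player 1 has a winning strategy, or (ii) player 2 has a winning strategy, or (iii) player 1 has an unbeatable strategy and player 2 has an unbeatable strategy. -/
/-- A strategy of player 1 in a finite-stage two-player game with alternating
moves of length `N`: for each stage `t ≤ N`, a map from the pair of partial
histories `(a_0,…,a_{t-1})` and `(b_0,…,b_{t-1})` to an action in `A`. -/
def Strat1 (A B : Type*) (N : ℕ) : Type _ :=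
  ∀ t : Fin (N + 1), (Fin t → A) → (Fin t → B) → A

/-- A strategy of player 2: for each stage `t ≤ N`, a map from the pair of
partial histories `(a_0,…,a_t)` and `(b_0,…,b_{t-1})` to an action in `B`. -/
def Strat2 (A B : Type*) (N : ℕ) : Type _ :=
  ∀ t : Fin (N + 1), (Fin (t + 1) → A) → (Fin t → B) → B

/-- The pair of partial histories of play of length `t` generated by the
strategy profile `(ξ, η)`:  `a_t = x_t(a^{t-1}, b^{t-1})`, `b_t = y_t(a^t, b^{t-1})`. -/
noncomputable def play {A B : Type*} [Nonempty A] [Nonempty B] {N : ℕ}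
    (ξ : Strat1 A B N) (η : Strat2 A B N) : (t : ℕ) → (Fin t → A) × (Fin t → B)
  | 0 => (Fin.elim0, Fin.elim0)
  | t + 1 =>
      let p := play ξ η t
      if h : t < N + 1 then
        let a : A := ξ ⟨t, h⟩ p.1 p.2
        let b : B := η ⟨t, h⟩ (Fin.snoc p.1 a) p.2
        (Fin.snoc p.1 a, Fin.snoc p.2 b)
      else (fun _ => Classical.arbitrary A, fun _ => Classical.arbitrary B)

/-- The outcome (whole history) `h(ξ,η) = (a_0,…,a_N, b_0,…,b_N)` of the game. -/
noncomputable def hist {A B : Type*} [Nonempty A] [Nonempty B] {N : ℕ}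
    (ξ : Strat1 A B N) (η : Strat2 A B N) :
    (Fin (N + 1) → A) × (Fin (N + 1) → B) :=
  play ξ η (N + 1)

/-- `ξ` is a winning strategy for player 1: `U(ξ,η) > V(ξ,η)` for every `η`. -/
def Winning1 {A B : Type*} [Nonempty A] [Nonempty B] {N : ℕ}
    (u v : (Fin (N + 1) → A) × (Fin (N + 1) → B) → ℝ) (ξ : Strat1 A B N) : Prop :=
  ∀ η : Strat2 A B N, v (hist ξ η) < u (hist ξ η)

/-- `ξ` is an unbeatable strategy for player 1: `U(ξ,η) ≥ V(ξ,η)` for every `η`. -/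
def Unbeatable1 {A B : Type*} [Nonempty A] [Nonempty B] {N : ℕ}
    (u v : (Fin (N + 1) → A) × (Fin (N + 1) → B) → ℝ) (ξ : Strat1 A B N) : Prop :=
  ∀ η : Strat2 A B N, v (hist ξ η) ≤ u (hist ξ η)

/-- `η` is a winning strategy for player 2: `V(ξ,η) > U(ξ,η)` for every `ξ`. -/
def Winning2 {A B : Type*} [Nonempty A] [Nonempty B] {N : ℕ}
    (u v : (Fin (N + 1) → A) × (Fin (N + 1) → B) → ℝ) (η : Strat2 A B N) : Prop :=
  ∀ ξ : Strat1 A B N, u (hist ξ η) < v (hist ξ η)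

/-- `η` is an unbeatable strategy for player 2: `V(ξ,η) ≥ U(ξ,η)` for every `ξ`. -/
def Unbeatable2 {A B : Type*} [Nonempty A] [Nonempty B] {N : ℕ}
    (u v : (Fin (N + 1) → A) × (Fin (N + 1) → B) → ℝ) (η : Strat2 A B N) : Prop :=
  ∀ ξ : Strat1 A B N, u (hist ξ η) ≤ v (hist ξ η)

/-- A strategy of player 1 is basic if each move depends only on the previous
moves of the rival. -/
def IsBasic1 {A B : Type*} {N : ℕ} (ξ : Strat1 A B N) : Prop :=
  ∀ (t : Fin (N + 1)) (as as' : Fin t → A) (bs : Fin t → B), ξ t as bs = ξ t as' bs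

/-- A strategy of player 2 is basic if each move depends only on the previous
moves of the rival. -/
def IsBasic2 {A B : Type*} {N : ℕ} (η : Strat2 A B N) : Prop :=
  ∀ (t : Fin (N + 1)) (as : Fin (t + 1) → A) (bs bs' : Fin t → B), η t as bs = η t as bs'

/-- The sequence of partial histories of player 1's moves generated by the
strategy `ξ` against the fixed move sequence `bs` of player 2. -/
noncomputable def play1 {A B : Type*} [Nonempty A] {N : ℕ}
    (ξ : Strat1 A B N) (bs : Fin (N + 1) → B) : (t : ℕ) → Fin t → A
  | 0 => Fin.elim0
  | t + 1 =>
      let p := play1 ξ bs t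
      if h : t < N + 1 then
        Fin.snoc p (ξ ⟨t, h⟩ p (fun i => bs ⟨i.val, lt_trans i.isLt h⟩))
      else fun _ => Classical.arbitrary A

/-- The sequence of partial histories of player 2's moves generated by the
strategy `η` against the fixed move sequence `as` of player 1. -/
noncomputable def play2 {A B : Type*} [Nonempty B] {N : ℕ}
    (η : Strat2 A B N) (as : Fin (N + 1) → A) : (t : ℕ) → Fin t → B
  | 0 => Fin.elim0
  | t + 1 =>
      let p := play2 η as t
      if h : t < N + 1 then
        Fin.snoc p (η ⟨t, h⟩
          (fun i => as ⟨i.val, Nat.lt_of_le_of_lt (Nat.le_of_lt_succ i.isLt) h⟩) p)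
      else fun _ => Classical.arbitrary B

/-- extend a partial history to a full sequence -/
noncomputable def extSeq {X : Type*} [Nonempty X] {n : ℕ} (f : Fin n → X) : ℕ → X :=
  fun i => if h : i < n then f ⟨i, h⟩ else Classical.arbitrary X

lemma extSeq_snoc {X : Type*} [Nonempty X] {n : ℕ} (f : Fin n → X) (x : X) :
    extSeq (Fin.snoc f x : Fin (n+1) → X) = Function.update (extSeq f) n x := by
  funext i
  unfold extSeq
  rcases lt_trichotomy i n with h | h | h
  · rw [dif_pos (by omega : i < n + 1), Function.update_of_ne (by omega), dif_pos h]
    have : (⟨i, by omega⟩ : Fin (n+1)) = Fin.castSucc ⟨i, h⟩ := rfl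
    rw [this, Fin.snoc_castSucc]
  · subst h
    rw [dif_pos (by omega : i < i + 1), Function.update_self]
    have : (⟨i, by omega⟩ : Fin (i+1)) = Fin.last i := rfl
    rw [this, Fin.snoc_last]
  · rw [dif_neg (by omega), Function.update_of_ne (by omega), dif_neg (by omega)]

/-- "Player 1 can force Q" with k moves remaining (current position is N+1-k). -/
def Force (N : ℕ) {A B : Type*} (Q : (ℕ → A) → (ℕ → B) → Prop) :
    ℕ → (ℕ → A) → (ℕ → B) → Prop
  | 0, f, g => Q f g
  | k+1, f, g => ∃ a, ∀ b, Force N Q k (Function.update f (N - k) a)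
      (Function.update g (N - k) b)

section
open scoped Classical
variable {A B : Type*} [Nonempty A] [Nonempty B] {N : ℕ}

noncomputable def str1 (Q : (ℕ → A) → (ℕ → B) → Prop) : Strat1 A B N :=
  fun t as bs =>
    if h : ∃ a, ∀ b, Force N Q (N - t) (Function.update (extSeq as) t a)
        (Function.update (extSeq bs) t b)
    then h.choose else Classical.arbitrary A

noncomputable def str2 (Q : (ℕ → A) → (ℕ → B) → Prop) : Strat2 A B N :=
  fun t as bs =>
    if h : ∃ b, ¬ Force N Q (N - t) (extSeq as) (Function.update (extSeq bs) t b)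
    then h.choose else Classical.arbitrary B

lemma inv1 (Q : (ℕ → A) → (ℕ → B) → Prop)
    (h0 : Force N Q (N+1) (extSeq (Fin.elim0 : Fin 0 → A))
      (extSeq (Fin.elim0 : Fin 0 → B)))
    (η : Strat2 A B N) :
    ∀ t, t ≤ N + 1 → Force N Q (N+1-t) (extSeq (play (str1 Q) η t).1)
      (extSeq (play (str1 Q) η t).2) := by
  intro t
  induction t with
  | zero => intro _; simpa [play] using h0
  | succ t ih =>
      intro ht
      have htN : t < N + 1 := by omega
      have IH := ih (by omega)
      have hk : N + 1 - t = (N - t) + 1 := by omega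
      rw [hk] at IH
      have hpos : N - (N - t) = t := by omega
      rw [Force, hpos] at IH
      have hk2 : N + 1 - (t+1) = N - t := by omega
      rw [hk2]
      simp only [play, dif_pos htN]
      set p := play (str1 Q) η t with hp
      have ha : str1 (N := N) Q ⟨t, htN⟩ p.1 p.2 = IH.choose := dif_pos IH
      rw [extSeq_snoc, extSeq_snoc, ha]
      exact IH.choose_spec _

end

section
open scoped Classical
variable {A B : Type*} [Nonempty A] [Nonempty B] {N : ℕ}

lemma inv2 (Q : (ℕ → A) → (ℕ → B) → Prop)
    (h0 : ¬ Force N Q (N+1) (extSeq (Fin.elim0 : Fin 0 → A))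
      (extSeq (Fin.elim0 : Fin 0 → B)))
    (ξ : Strat1 A B N) :
    ∀ t, t ≤ N + 1 → ¬ Force N Q (N+1-t) (extSeq (play ξ (str2 Q) t).1)
      (extSeq (play ξ (str2 Q) t).2) := by
  intro t
  induction t with
  | zero => intro _; simpa [play] using h0
  | succ t ih =>
      intro ht
      have htN : t < N + 1 := by omega
      have IH := ih (by omega)
      have hk : N + 1 - t = (N - t) + 1 := by omega
      rw [hk] at IH
      have hpos : N - (N - t) = t := by omega
      rw [Force, hpos] at IH
      push_neg at IH
      have hk2 : N + 1 - (t+1) = N - t := by omega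
      rw [hk2]
      simp only [play, dif_pos htN]
      set p := play ξ (str2 Q) t with hp
      set a := ξ ⟨t, htN⟩ p.1 p.2 with haa
      have hb := IH a
      rw [← extSeq_snoc] at hb
      have hbc : str2 (N := N) Q ⟨t, htN⟩ (Fin.snoc p.1 a) p.2 = hb.choose :=
        dif_pos hb
      rw [extSeq_snoc p.2, hbc]
      exact hb.choose_spec

lemma determined (P : (Fin (N+1) → A) × (Fin (N+1) → B) → Prop) :
    (∃ ξ : Strat1 A B N, ∀ η, P (hist ξ η)) ∨
    (∃ η : Strat2 A B N, ∀ ξ, ¬ P (hist ξ η)) := by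
  set Q : (ℕ → A) → (ℕ → B) → Prop :=
    fun f g => P (fun i => f i.val, fun i => g i.val) with hQ
  have key : ∀ (ξ : Strat1 A B N) (η : Strat2 A B N),
      Q (extSeq (hist ξ η).1) (extSeq (hist ξ η).2) ↔ P (hist ξ η) := by
    intro ξ η
    have h1 : (fun i : Fin (N+1) => extSeq (hist ξ η).1 i.val) = (hist ξ η).1 := by
      funext i; simp [extSeq, i.isLt]
    have h2 : (fun i : Fin (N+1) => extSeq (hist ξ η).2 i.val) = (hist ξ η).2 := by
      funext i; simp [extSeq, i.isLt]
    rw [hQ]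
    simp only [h1, h2]
  by_cases h : Force N Q (N+1) (extSeq (Fin.elim0 : Fin 0 → A))
      (extSeq (Fin.elim0 : Fin 0 → B))
  · left
    refine ⟨str1 Q, fun η => ?_⟩
    have h1 := inv1 Q h η (N+1) le_rfl
    rw [Nat.sub_self] at h1
    exact (key _ _).mp h1
  · right
    refine ⟨str2 Q, fun ξ => ?_⟩
    have h1 := inv2 Q h ξ (N+1) le_rfl
    rw [Nat.sub_self] at h1
    exact fun hc => h1 ((key _ _).mpr hc)

end

/-- **Zermelo's theorem, general form.** In any finite-stage two-player game
with alternating moves, either player 1 has a winning strategy, or player 2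
has a winning strategy, or both players have unbeatable strategies. -/
theorem zermelo_general {A B : Type*} [Nonempty A] [Nonempty B] {N : ℕ}
    (u v : (Fin (N + 1) → A) × (Fin (N + 1) → B) → ℝ) :
    (∃ ξ : Strat1 A B N, Winning1 u v ξ) ∨
    (∃ η : Strat2 A B N, Winning2 u v η) ∨
    ((∃ ξ : Strat1 A B N, Unbeatable1 u v ξ) ∧
      (∃ η : Strat2 A B N, Unbeatable2 u v η)) := by
  rcases determined (fun h => v h < u h) with ⟨ξ, hξ⟩ | ⟨η, hη⟩
  · exact Or.inl ⟨ξ, hξ⟩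
  · rcases determined (fun h => ¬ (u h < v h)) with ⟨ξ, hξ⟩ | ⟨η2, hη2⟩
    · refine Or.inr (Or.inr ⟨⟨ξ, fun η' => ?_⟩, ⟨η, fun ξ' => ?_⟩⟩)
      · exact not_lt.mp (hξ η')
      · exact not_lt.mp (hη ξ')
    · exact Or.inr (Or.inl ⟨η2, fun ξ' => not_not.mp (hη2 ξ')⟩)
end

section
/- In any finite-stage two-player game with alternating moves, either (i) player 1 has a basic winning strategy, or (ii) player 2 has a basic winning strategy, or (iii) player 1 has a basic unbeatable strategy and player 2 has a basic unbeatable strategy, where a basic strategy is one in which each move depends only on the previous moves of the rival. -/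
section ZermeloAux

variable {A B : Type*} [Nonempty A] [Nonempty B] {N : ℕ}

/-- Extend a family of player-1 strategies for the length-`N` subgame (indexed by
player 2's first move) by a first move `a0`. -/
noncomputable def ext1 (a0 : A) (ξb : B → Strat1 A B N) : Strat1 A B (N + 1) :=
  fun t => Fin.cases (motive := fun t : Fin (N + 2) => (Fin t → A) → (Fin t → B) → A)
    (fun _ _ => a0)
    (fun t' as bs => ξb (bs ⟨0, Nat.succ_pos _⟩) t'
      (fun i => as ⟨i.1 + 1, Nat.succ_lt_succ i.isLt⟩)
      (fun i => bs ⟨i.1 + 1, Nat.succ_lt_succ i.isLt⟩)) t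

/-- Extend a family of player-2 strategies for the length-`N` subgame (indexed by
player 1's first move) by a first-move response `b0f`. -/
noncomputable def ext2 (b0f : A → B) (ηa : A → Strat2 A B N) : Strat2 A B (N + 1) :=
  fun t => Fin.cases (motive := fun t : Fin (N + 2) => (Fin (t + 1) → A) → (Fin t → B) → B)
    (fun as _ => b0f (as ⟨0, Nat.succ_pos _⟩))
    (fun t' as bs => ηa (as ⟨0, Nat.succ_pos _⟩) t'
      (fun i => as ⟨i.1 + 1, Nat.succ_lt_succ i.isLt⟩)
      (fun i => bs ⟨i.1 + 1, Nat.succ_lt_succ i.isLt⟩)) t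

theorem play_fst (ξ : Strat1 A B N) (η : Strat2 A B N) (t : ℕ) (h : t < N + 1) :
    (play ξ η (t + 1)).1 =
      Fin.snoc (play ξ η t).1 (ξ ⟨t, h⟩ (play ξ η t).1 (play ξ η t).2) := by
  simp only [play]
  rw [dif_pos h]

theorem play_snd (ξ : Strat1 A B N) (η : Strat2 A B N) (t : ℕ) (h : t < N + 1) :
    (play ξ η (t + 1)).2 =
      Fin.snoc (play ξ η t).2
        (η ⟨t, h⟩ (Fin.snoc (play ξ η t).1 (ξ ⟨t, h⟩ (play ξ η t).1 (play ξ η t).2))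
          (play ξ η t).2) := by
  simp only [play]
  rw [dif_pos h]

theorem fin_one_eq {C : Type*} (f g : Fin 1 → C) (h : f 0 = g 0) : f = g := by
  funext i
  have : i = 0 := Subsingleton.elim _ _
  rw [this, h]

theorem hist_zero (ξ : Strat1 A B 0) (η : Strat2 A B 0) :
    hist ξ η = (fun _ => ξ 0 Fin.elim0 Fin.elim0,
      fun _ => η 0 (fun _ => ξ 0 Fin.elim0 Fin.elim0) Fin.elim0) := by
  have z1 : (play ξ η 0).1 = Fin.elim0 := rfl
  have z2 : (play ξ η 0).2 = Fin.elim0 := rfl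
  have e1 : (hist ξ η).1 = fun _ => ξ 0 Fin.elim0 Fin.elim0 := by
    show (play ξ η 1).1 = _
    rw [play_fst ξ η 0 (Nat.succ_pos 0), z1, z2]
    refine fin_one_eq _ _ ?_
    simp [Fin.snoc]
  have e2 : (hist ξ η).2 =
      fun _ => η 0 (fun _ => ξ 0 Fin.elim0 Fin.elim0) Fin.elim0 := by
    show (play ξ η 1).2 = _
    rw [play_snd ξ η 0 (Nat.succ_pos 0), z1, z2]
    refine fin_one_eq _ _ ?_
    simp [Fin.snoc]
    have e : (Fin.snoc (α := fun _ => A) Fin.elim0 (ξ ⟨0, Nat.succ_pos 0⟩ Fin.elim0 Fin.elim0) : Fin 1 → A)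
        = fun _ => ξ 0 Fin.elim0 Fin.elim0 := by
      refine fin_one_eq _ _ ?_
      simp [Fin.snoc]
    exact congrArg (fun f => η 0 f Fin.elim0) e
  calc hist ξ η = ((hist ξ η).1, (hist ξ η).2) := rfl
    _ = _ := by rw [e1, e2]

theorem play_shift (ξ' : Strat1 A B (N + 1)) (η' : Strat2 A B (N + 1))
    (a0 : A) (b0 : B)
    (ha : ξ' 0 Fin.elim0 Fin.elim0 = a0)
    (hb : η' 0 (Fin.snoc Fin.elim0 a0) Fin.elim0 = b0)
    (ξ : Strat1 A B N)
    (hξ : ∀ (t : Fin (N + 1)) as bs, ξ' t.succ (Fin.cons a0 as) (Fin.cons b0 bs) = ξ t as bs)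
    (η : Strat2 A B N)
    (hη : ∀ (t : Fin (N + 1)) as bs, η' t.succ (Fin.cons a0 as) (Fin.cons b0 bs) = η t as bs) :
    ∀ t, t ≤ N + 1 →
      (play ξ' η' (t + 1)).1 = Fin.cons a0 (play ξ η t).1 ∧
      (play ξ' η' (t + 1)).2 = Fin.cons b0 (play ξ η t).2 := by
  intro t
  induction t with
  | zero =>
      intro _
      have z1 : (play ξ' η' 0).1 = Fin.elim0 := rfl
      have z2 : (play ξ' η' 0).2 = Fin.elim0 := rfl
      have w1 : (play ξ η 0).1 = Fin.elim0 := rfl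
      have w2 : (play ξ η 0).2 = Fin.elim0 := rfl
      have ha' : ξ' ⟨0, Nat.succ_pos (N + 1)⟩ Fin.elim0 Fin.elim0 = a0 := ha
      constructor
      · rw [play_fst ξ' η' 0 (Nat.succ_pos _), z1, z2, w1, ha']
        refine fin_one_eq _ _ ?_
        simp [Fin.snoc]
      · rw [play_snd ξ' η' 0 (Nat.succ_pos _), z1, z2, w2, ha']
        have hb' : η' ⟨0, Nat.succ_pos (N + 1)⟩ (Fin.snoc Fin.elim0 a0) Fin.elim0 = b0 := hb
        rw [hb']
        refine fin_one_eq _ _ ?_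
        simp [Fin.snoc]
  | succ t ih =>
      intro ht
      have htlt : t < N + 1 := ht
      have h2 : t + 1 < N + 2 := Nat.succ_lt_succ htlt
      obtain ⟨ih1, ih2⟩ := ih (Nat.le_of_succ_le ht)
      have hξ' : ξ' ⟨t + 1, h2⟩ (Fin.cons a0 (play ξ η t).1) (Fin.cons b0 (play ξ η t).2)
          = ξ ⟨t, htlt⟩ (play ξ η t).1 (play ξ η t).2 := hξ ⟨t, htlt⟩ _ _
      constructor
      · rw [play_fst ξ' η' (t + 1) h2, ih1, ih2, hξ', play_fst ξ η t htlt,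
          Fin.cons_snoc_eq_snoc_cons]
      · rw [play_snd ξ' η' (t + 1) h2, ih1, ih2, hξ', ← Fin.cons_snoc_eq_snoc_cons,
          ← Fin.cons_snoc_eq_snoc_cons]
        have hη' : η' ⟨t + 1, h2⟩
            (Fin.cons a0 (Fin.snoc (play ξ η t).1 (ξ ⟨t, htlt⟩ (play ξ η t).1 (play ξ η t).2)))
            (Fin.cons b0 (play ξ η t).2)
            = η ⟨t, htlt⟩ (Fin.snoc (play ξ η t).1 (ξ ⟨t, htlt⟩ (play ξ η t).1 (play ξ η t).2))
              (play ξ η t).2 := hη ⟨t, htlt⟩ _ _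
        rw [hη', play_snd ξ η t htlt]

theorem hist_shift (ξ' : Strat1 A B (N + 1)) (η' : Strat2 A B (N + 1))
    (a0 : A) (b0 : B)
    (ha : ξ' 0 Fin.elim0 Fin.elim0 = a0)
    (hb : η' 0 (Fin.snoc Fin.elim0 a0) Fin.elim0 = b0)
    (ξ : Strat1 A B N)
    (hξ : ∀ (t : Fin (N + 1)) as bs, ξ' t.succ (Fin.cons a0 as) (Fin.cons b0 bs) = ξ t as bs)
    (η : Strat2 A B N)
    (hη : ∀ (t : Fin (N + 1)) as bs, η' t.succ (Fin.cons a0 as) (Fin.cons b0 bs) = η t as bs) :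
    hist ξ' η' = (Fin.cons a0 (hist ξ η).1, Fin.cons b0 (hist ξ η).2) := by
  obtain ⟨h1, h2⟩ := play_shift ξ' η' a0 b0 ha hb ξ hξ η hη (N + 1) le_rfl
  exact Prod.ext h1 h2

theorem determinacy {A B : Type*} [Nonempty A] [Nonempty B] : ∀ (N : ℕ)
    (W : (Fin (N + 1) → A) × (Fin (N + 1) → B) → Prop),
    (∃ ξ : Strat1 A B N, IsBasic1 ξ ∧ ∀ η, W (hist ξ η)) ∨
    (∃ η : Strat2 A B N, IsBasic2 η ∧ ∀ ξ, ¬ W (hist ξ η)) := by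
  intro N
  induction N with
  | zero =>
      intro W
      by_cases h : ∃ a0 : A, ∀ b0 : B, W (fun _ => a0, fun _ => b0)
      · obtain ⟨a0, h⟩ := h
        refine Or.inl ⟨fun _ _ _ => a0, fun _ _ _ _ => rfl, fun η => ?_⟩
        rw [hist_zero (fun _ _ _ => a0) η]
        exact h _
      · push_neg at h
        choose f hf using h
        refine Or.inr ⟨fun _ as _ => f (as 0), fun _ _ _ _ => rfl, fun ξ => ?_⟩
        rw [hist_zero ξ (fun _ as _ => f (as 0))]
        exact hf _
  | succ N ih =>
      intro W
      by_cases h : ∃ a0 : A, ∀ b0 : B,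
          ∃ ξ : Strat1 A B N, IsBasic1 ξ ∧
            ∀ η, W (Fin.cons a0 (hist ξ η).1, Fin.cons b0 (hist ξ η).2)
      · obtain ⟨a0, h⟩ := h
        choose ξb hbasic hforce using h
        refine Or.inl ⟨ext1 a0 ξb, ?_, ?_⟩
        · intro t
          refine Fin.cases (motive := fun t : Fin (N + 2) =>
              ∀ (as as' : Fin t → A) (bs : Fin t → B),
                ext1 a0 ξb t as bs = ext1 a0 ξb t as' bs)
            (fun _ _ _ => rfl) (fun t' as as' bs => hbasic _ t' _ _ _) t
        · intro η
          have key := hist_shift (ext1 a0 ξb) η a0 (η 0 (Fin.snoc Fin.elim0 a0) Fin.elim0)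
            rfl rfl (ξb (η 0 (Fin.snoc Fin.elim0 a0) Fin.elim0)) (fun _ _ _ => rfl)
            (fun t as bs => η t.succ (Fin.cons a0 as)
              (Fin.cons (η 0 (Fin.snoc Fin.elim0 a0) Fin.elim0) bs)) (fun _ _ _ => rfl)
          rw [key]
          exact hforce _ _
      · push_neg at h
        have h2 : ∀ a0 : A, ∃ b0 : B, ∃ η : Strat2 A B N, IsBasic2 η ∧
            ∀ ξ, ¬ W (Fin.cons a0 (hist ξ η).1, Fin.cons b0 (hist ξ η).2) := by
          intro a0
          obtain ⟨b0, hb0⟩ := h a0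
          refine ⟨b0, ?_⟩
          rcases ih (fun p => W (Fin.cons a0 p.1, Fin.cons b0 p.2)) with h1 | h1
          · obtain ⟨ξ, hξ1, hξ2⟩ := h1
            obtain ⟨η, hη⟩ := hb0 ξ hξ1
            exact absurd (hξ2 η) hη
          · exact h1
        choose b0f ηa hbasic hblock using h2
        refine Or.inr ⟨ext2 b0f ηa, ?_, ?_⟩
        · intro t
          refine Fin.cases (motive := fun t : Fin (N + 2) =>
              ∀ (as : Fin (t + 1) → A) (bs bs' : Fin t → B),
                ext2 b0f ηa t as bs = ext2 b0f ηa t as bs')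
            (fun _ _ _ => rfl) (fun t' as bs bs' => hbasic _ t' _ _ _) t
        · intro ξ
          have hb : ext2 b0f ηa 0 (Fin.snoc Fin.elim0 (ξ 0 Fin.elim0 Fin.elim0)) Fin.elim0
              = b0f (ξ 0 Fin.elim0 Fin.elim0) := by
            have e : (Fin.snoc (α := fun _ => A) Fin.elim0 (ξ 0 Fin.elim0 Fin.elim0) : Fin 1 → A)
                ⟨0, Nat.succ_pos 0⟩ = ξ 0 Fin.elim0 Fin.elim0 := by
              simp [Fin.snoc]
            exact congrArg b0f e
          have key := hist_shift ξ (ext2 b0f ηa) (ξ 0 Fin.elim0 Fin.elim0)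
            (b0f (ξ 0 Fin.elim0 Fin.elim0)) rfl hb
            (fun t as bs => ξ t.succ (Fin.cons (ξ 0 Fin.elim0 Fin.elim0) as)
              (Fin.cons (b0f (ξ 0 Fin.elim0 Fin.elim0)) bs)) (fun _ _ _ => rfl)
            (ηa (ξ 0 Fin.elim0 Fin.elim0)) (fun _ _ _ => rfl)
          rw [key]
          exact hblock _ _

end ZermeloAux

/-- **Zermelo's theorem with basic strategies.** In any finite-stage
two-player game with alternating moves, either player 1 has a basic winning
strategy, or player 2 has a basic winning strategy, or both players have
basic unbeatable strategies. -/
theorem zermelo_basic {A B : Type*} [Nonempty A] [Nonempty B] {N : ℕ}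
    (u v : (Fin (N + 1) → A) × (Fin (N + 1) → B) → ℝ) :
    (∃ ξ : Strat1 A B N, IsBasic1 ξ ∧ Winning1 u v ξ) ∨
    (∃ η : Strat2 A B N, IsBasic2 η ∧ Winning2 u v η) ∨
    ((∃ ξ : Strat1 A B N, IsBasic1 ξ ∧ Unbeatable1 u v ξ) ∧
      (∃ η : Strat2 A B N, IsBasic2 η ∧ Unbeatable2 u v η)) := by
  rcases determinacy N (fun p => v p < u p) with ⟨ξ, hξb, hξ⟩ | ⟨η, hηb, hη⟩
  · exact Or.inl ⟨ξ, hξb, hξ⟩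
  rcases determinacy N (fun p => v p ≤ u p) with ⟨ξ, hξb, hξ⟩ | ⟨η', hηb', hη'⟩
  · exact Or.inr (Or.inr ⟨⟨ξ, hξb, hξ⟩, ⟨η, hηb, fun ξ' => le_of_not_gt (hη ξ')⟩⟩)
  · exact Or.inr (Or.inl ⟨η', hηb', fun ξ' => lt_of_not_ge (hη' ξ')⟩)
end

section
/- In any finite-stage two-player game with alternating moves, either player 1 has a basic winning strategy or player 2 has a basic unbeatable strategy. -/
/- ===== auxiliary development ===== -/

section Aux

variable {A B : Type*} {N : ℕ}
variable (u v : (Fin (N + 1) → A) × (Fin (N + 1) → B) → ℝ)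

attribute [local instance] Classical.propDecidable

/-- `Wd k t as bs` : player 1 can force a final history `h` with `v h < u h`
starting from position `(as, bs)` at stage `t`, where `k` counts remaining stages. -/
def Wd : (k : ℕ) → (t : ℕ) → (Fin t → A) → (Fin t → B) → Prop
  | 0, t, as, bs => ∀ h : t = N + 1,
      v (fun i => as (Fin.cast h.symm i), fun i => bs (Fin.cast h.symm i)) <
        u (fun i => as (Fin.cast h.symm i), fun i => bs (Fin.cast h.symm i))
  | k + 1, t, as, bs => ∃ a : A, ∀ b : B, Wd k (t + 1) (Fin.snoc as a) (Fin.snoc bs b)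

lemma Wd_succ {k t : ℕ} {as : Fin t → A} {bs : Fin t → B} :
    Wd u v (k + 1) t as bs ↔
      ∃ a : A, ∀ b : B, Wd u v k (t + 1) (Fin.snoc as a) (Fin.snoc bs b) := Iff.rfl

noncomputable def choiceA [Nonempty A] (t : ℕ) (as : Fin t → A) (bs : Fin t → B) : A :=
  if h : ∃ a : A, ∀ b : B, Wd u v (N - t) (t + 1) (Fin.snoc as a) (Fin.snoc bs b) then
    h.choose else Classical.arbitrary A

lemma choiceA_spec [Nonempty A] {t : ℕ} {as : Fin t → A} {bs : Fin t → B}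
    (hex : ∃ a : A, ∀ b : B, Wd u v (N - t) (t + 1) (Fin.snoc as a) (Fin.snoc bs b)) :
    ∀ b : B, Wd u v (N - t) (t + 1) (Fin.snoc as (choiceA u v t as bs)) (Fin.snoc bs b) := by
  unfold choiceA; rw [dif_pos hex]; exact hex.choose_spec

noncomputable def choiceB [Nonempty B] (t : ℕ) (as : Fin (t + 1) → A) (bs : Fin t → B) : B :=
  if h : ∃ b : B, ¬ Wd u v (N - t) (t + 1) as (Fin.snoc bs b) then
    h.choose else Classical.arbitrary B

lemma choiceB_spec [Nonempty B] {t : ℕ} {as : Fin (t + 1) → A} {bs : Fin t → B}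
    (hex : ∃ b : B, ¬ Wd u v (N - t) (t + 1) as (Fin.snoc bs b)) :
    ¬ Wd u v (N - t) (t + 1) as (Fin.snoc bs (choiceB u v t as bs)) := by
  unfold choiceB; rw [dif_pos hex]; exact hex.choose_spec

noncomputable def g1 [Nonempty A] : (t : ℕ) → (Fin t → B) → (Fin t → A)
  | 0, _ => Fin.elim0
  | t + 1, bs =>
      Fin.snoc (g1 t (Fin.init bs)) (choiceA u v t (g1 t (Fin.init bs)) (Fin.init bs))

noncomputable def xi0 [Nonempty A] : Strat1 A B N :=
  fun t _ bs => choiceA u v t.val (g1 u v t.val bs) bs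

noncomputable def g2 [Nonempty B] : (t : ℕ) → (Fin t → A) → (Fin t → B)
  | 0, _ => Fin.elim0
  | t + 1, as =>
      Fin.snoc (g2 t (Fin.init as)) (choiceB u v t as (g2 t (Fin.init as)))

noncomputable def eta0 [Nonempty B] : Strat2 A B N :=
  fun t as _ => choiceB u v t.val as (g2 u v t.val (Fin.init as))

variable [Nonempty A] [Nonempty B]

lemma play_succ (ξ : Strat1 A B N) (η : Strat2 A B N) {t : ℕ} (ht : t < N + 1) :
    play ξ η (t + 1) =
      (Fin.snoc (play ξ η t).1 (ξ ⟨t, ht⟩ (play ξ η t).1 (play ξ η t).2),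
       Fin.snoc (play ξ η t).2 (η ⟨t, ht⟩
         (Fin.snoc (play ξ η t).1 (ξ ⟨t, ht⟩ (play ξ η t).1 (play ξ η t).2))
         (play ξ η t).2)) := by
  rw [play, dif_pos ht]

lemma inv1_s2 (hW : Wd u v (N + 1) 0 Fin.elim0 Fin.elim0) (η : Strat2 A B N) :
    ∀ t, t ≤ N + 1 →
      (play (xi0 u v) η t).1 = g1 u v t (play (xi0 u v) η t).2 ∧
      Wd u v (N + 1 - t) t (play (xi0 u v) η t).1 (play (xi0 u v) η t).2 := by
  intro t
  induction t with
  | zero =>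
      intro _
      refine ⟨funext fun i => i.elim0, hW⟩
  | succ t ih =>
      intro h
      have ht : t < N + 1 := h
      obtain ⟨ih1, ih2⟩ := ih (le_of_lt h)
      set p := play (xi0 u v) η t with hp
      have ha : xi0 u v ⟨t, ht⟩ p.1 p.2 = choiceA u v t p.1 p.2 := by
        show choiceA u v t (g1 u v t p.2) p.2 = _
        rw [← ih1]
      have hsub : N + 1 - t = (N - t) + 1 := by omega
      have hsub2 : N - t = N + 1 - (t + 1) := by omega
      rw [hsub] at ih2
      have hex := (Wd_succ u v).mp ih2
      have hspec := choiceA_spec u v hex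
      rw [play_succ _ _ ht, ha]
      constructor
      · show Fin.snoc p.1 (choiceA u v t p.1 p.2) = g1 u v (t + 1) _
        rw [g1, Fin.init_snoc, ← ih1]
      · rw [← hsub2]
        exact hspec _

lemma inv2_s2 (hW : ¬ Wd u v (N + 1) 0 Fin.elim0 Fin.elim0) (ξ : Strat1 A B N) :
    ∀ t, t ≤ N + 1 →
      (play ξ (eta0 u v) t).2 = g2 u v t (play ξ (eta0 u v) t).1 ∧
      ¬ Wd u v (N + 1 - t) t (play ξ (eta0 u v) t).1 (play ξ (eta0 u v) t).2 := by
  intro t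
  induction t with
  | zero =>
      intro _
      refine ⟨funext fun i => i.elim0, hW⟩
  | succ t ih =>
      intro h
      have ht : t < N + 1 := h
      obtain ⟨ih1, ih2⟩ := ih (le_of_lt h)
      set p := play ξ (eta0 u v) t with hp
      set a := ξ ⟨t, ht⟩ p.1 p.2 with hadef
      have hsub : N + 1 - t = (N - t) + 1 := by omega
      have hsub2 : N - t = N + 1 - (t + 1) := by omega
      rw [hsub] at ih2
      have hall : ∀ a' : A, ∃ b : B,
          ¬ Wd u v (N - t) (t + 1) (Fin.snoc p.1 a') (Fin.snoc p.2 b) := by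
        intro a'
        by_contra hc
        push_neg at hc
        exact ih2 ⟨a', hc⟩
      have hex := hall a
      have hb : eta0 u v ⟨t, ht⟩ (Fin.snoc p.1 a) p.2
          = choiceB u v t (Fin.snoc p.1 a) p.2 := by
        unfold eta0
        simp only [Fin.init_snoc]
        rw [← ih1]
      have hspec := choiceB_spec u v hex
      rw [play_succ _ _ ht, hb]
      constructor
      · show Fin.snoc p.2 (choiceB u v t (Fin.snoc p.1 a) p.2) = g2 u v (t + 1) _
        rw [g2, Fin.init_snoc, ← ih1]
      · rw [← hsub2]
        exact hspec

end Aux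

/-- In any finite-stage two-player game with alternating moves, either
player 1 has a basic winning strategy or player 2 has a basic unbeatable
strategy. -/
theorem win1_or_unbeatable2_basic {A B : Type*} [Nonempty A] [Nonempty B] {N : ℕ}
    (u v : (Fin (N + 1) → A) × (Fin (N + 1) → B) → ℝ) :
    (∃ ξ : Strat1 A B N, IsBasic1 ξ ∧ Winning1 u v ξ) ∨
    (∃ η : Strat2 A B N, IsBasic2 η ∧ Unbeatable2 u v η) := by
  by_cases hW : Wd u v (N + 1) 0 Fin.elim0 Fin.elim0
  · left
    refine ⟨xi0 u v, fun t as as' bs => rfl, fun η => ?_⟩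
    have h := (inv1_s2 u v hW η (N + 1) le_rfl).2
    rw [Nat.sub_self] at h
    exact h rfl
  · right
    refine ⟨eta0 u v, fun t as bs bs' => rfl, fun ξ => ?_⟩
    have h := (inv2_s2 u v hW ξ (N + 1) le_rfl).2
    rw [Nat.sub_self] at h
    by_contra hlt
    push_neg at hlt
    exact h (fun _ => hlt)
end
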